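/- Under the stated assumptions, for every N ≥ 0 the accelerated Nesterov iterates satisfy f_N(y_N) − f* ≤ ((L+μ)R²/2)·(1 − 1/√κ)^N and ‖y_N − x*‖² ≤ ((L+μ)R²/μ)·(1 − 1/√κ)^N, where R = ‖x_0 − x*‖. -/

import Mathlib

open scoped RealInnerProductSpace

lemma descent_lemma {d : ℕ} (L : ℝ)
    (F : EuclideanSpace ℝ (Fin d) → ℝ) (G : EuclideanSpace ℝ (Fin d) → EuclideanSpace ℝ (Fin d))
    (hgrad : ∀ x, HasGradientAt F (G x) x)
    (hlip : ∀ x y, ‖G y - G x‖ ≤ L * ‖y - x‖)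
    (x y : EuclideanSpace ℝ (Fin d)) :
    F y ≤ F x + ⟪G x, y - x⟫ + L / 2 * ‖y - x‖ ^ 2 := by
  set v := y - x with hv
  set φ : ℝ → ℝ := fun t => F (x + t • v) - t * ⟪G x, v⟫ - L / 2 * t ^ 2 * ‖v‖ ^ 2 with hφ
  have hd : ∀ t : ℝ, HasDerivAt φ (⟪G (x + t • v), v⟫ - ⟪G x, v⟫ - L * t * ‖v‖ ^ 2) t := by
    intro t
    have hc : HasDerivAt (fun t : ℝ => x + t • v) v t := by
      simpa using ((hasDerivAt_id t).smul_const v).const_add x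
    have hF : HasDerivAt (fun t : ℝ => F (x + t • v)) ⟪G (x + t • v), v⟫ t := by
      have := (hgrad (x + t • v)).hasFDerivAt.comp_hasDerivAt t hc
      exact this
    have h2 : HasDerivAt (fun t : ℝ => t * ⟪G x, v⟫) ⟪G x, v⟫ t := by
      simpa using (hasDerivAt_id t).mul_const (⟪G x, v⟫ : ℝ)
    have h3 : HasDerivAt (fun t : ℝ => L / 2 * t ^ 2 * ‖v‖ ^ 2) (L * t * ‖v‖ ^ 2) t := by
      have := ((hasDerivAt_pow 2 t).const_mul (L / 2)).mul_const (‖v‖ ^ 2)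
      convert this using 1
      · rfl
      · rfl
      · push_cast
        ring
    exact (hF.sub h2).sub h3
  have hdiff : Differentiable ℝ φ := fun t => (hd t).differentiableAt
  have hanti : AntitoneOn φ (Set.Icc 0 1) := by
    apply antitoneOn_of_deriv_nonpos (convex_Icc 0 1) hdiff.continuous.continuousOn
      (fun t _ => (hdiff t).differentiableWithinAt)
    intro t ht
    rw [interior_Icc] at ht
    rw [(hd t).deriv]
    have h1 : ⟪G (x + t • v) - G x, v⟫ ≤ ‖G (x + t • v) - G x‖ * ‖v‖ := real_inner_le_norm _ _
    have h2 : ‖G (x + t • v) - G x‖ ≤ L * (t * ‖v‖) := by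
      have := hlip x (x + t • v)
      simpa [norm_smul, abs_of_nonneg ht.1.le, mul_assoc] using this
    have h3 : ⟪G (x + t • v), v⟫ - ⟪G x, v⟫ = ⟪G (x + t • v) - G x, v⟫ :=
      (inner_sub_left _ _ _).symm
    nlinarith [norm_nonneg v, norm_nonneg (G (x + t • v) - G x), ht.1.le]
  have h01 := hanti (Set.mem_Icc.2 ⟨le_refl 0, zero_le_one⟩)
    (Set.mem_Icc.2 ⟨zero_le_one, le_refl 1⟩) zero_le_one
  have e0 : φ 0 = F x := by simp [hφ]
  have e1 : φ 1 = F (x + v) - ⟪G x, v⟫ - L / 2 * ‖v‖ ^ 2 := by simp [hφ]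
  have exy : x + v = y := by rw [hv]; abel
  rw [e0, e1, exy] at h01
  linarith

lemma convex_norm_sq {d : ℕ} (t : ℝ) (ht0 : 0 ≤ t) (ht1 : t ≤ 1)
    (u w : EuclideanSpace ℝ (Fin d)) :
    ‖(1 - t) • u + t • w‖ ^ 2 ≤ (1 - t) * ‖u‖ ^ 2 + t * ‖w‖ ^ 2 := by
  have hexp : ‖(1 - t) • u + t • w‖ ^ 2
      = (1 - t) ^ 2 * ‖u‖ ^ 2 + 2 * ((1 - t) * t * ⟪u, w⟫) + t ^ 2 * ‖w‖ ^ 2 := by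
    rw [norm_add_sq_real, norm_smul, norm_smul, real_inner_smul_left, real_inner_smul_right]
    rw [Real.norm_eq_abs, Real.norm_eq_abs, abs_of_nonneg (by linarith : (0:ℝ) ≤ 1 - t),
      abs_of_nonneg ht0]
    ring
  have h1 : ⟪u, w⟫ ≤ ‖u‖ * ‖w‖ := real_inner_le_norm u w
  nlinarith [sq_nonneg (‖u‖ - ‖w‖), mul_nonneg (by linarith : (0:ℝ) ≤ 1 - t) ht0,
    norm_nonneg u, norm_nonneg w]

set_option maxHeartbeats 2000000 in
/-- Convergence of accelerated Nesterov's method run over a uniformly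
non-increasing sequence of `L`-smooth `μ`-strongly convex functions with a common
minimizer `x*` and common minimal value `f*`: for every `N`,
`f_N(y_N) − f* ≤ ((L+μ)R²/2)·(1 − 1/√κ)^N` and
`‖y_N − x*‖² ≤ ((L+μ)R²/μ)·(1 − 1/√κ)^N`, where `κ = L/μ` and `R = ‖x₀ − x*‖`. -/
theorem nesterov_time_varying_convergence
    {d : ℕ} (L μ : ℝ) (hμ : 0 < μ) (hμL : μ < L)
    (f : ℕ → EuclideanSpace ℝ (Fin d) → ℝ)
    (g : ℕ → EuclideanSpace ℝ (Fin d) → EuclideanSpace ℝ (Fin d))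
    (hgrad : ∀ k x, HasGradientAt (f k) (g k x) x)
    (hsmooth : ∀ k x y, ‖g k y - g k x‖ ≤ L * ‖y - x‖)
    (hstrong : ∀ k x y, f k x + ⟪g k x, y - x⟫ + μ / 2 * ‖y - x‖ ^ 2 ≤ f k y)
    (hmono : ∀ k x, f (k + 1) x ≤ f k x)
    (xstar : EuclideanSpace ℝ (Fin d)) (fstar : ℝ)
    (hmin : ∀ k x, f k xstar ≤ f k x) (hval : ∀ k, f k xstar = fstar)
    (κ : ℝ) (hκ : κ = L / μ)
    (x0 : EuclideanSpace ℝ (Fin d)) (x y : ℕ → EuclideanSpace ℝ (Fin d))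
    (hx0 : x 0 = x0) (hy0 : y 0 = x0)
    (hyup : ∀ k, y (k + 1) = x k - (1 / L) • g k (x k))
    (hxup : ∀ k, x (k + 1) =
      (1 + (Real.sqrt κ - 1) / (Real.sqrt κ + 1)) • y (k + 1)
        - ((Real.sqrt κ - 1) / (Real.sqrt κ + 1)) • y k)
    (R : ℝ) (hR : R = ‖x0 - xstar‖) :
    ∀ N : ℕ,
      f N (y N) - fstar ≤ (L + μ) * R ^ 2 / 2 * (1 - 1 / Real.sqrt κ) ^ N ∧
      ‖y N - xstar‖ ^ 2 ≤ (L + μ) * R ^ 2 / μ * (1 - 1 / Real.sqrt κ) ^ N := by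
  have hL : 0 < L := lt_trans hμ hμL
  obtain ⟨s, hs⟩ : ∃ t : ℝ, Real.sqrt κ = t := ⟨_, rfl⟩
  rw [hs] at hxup
  simp only [hs]
  have hκ1 : 1 < κ := by rw [hκ]; exact (one_lt_div hμ).mpr hμL
  have hκ0 : 0 < κ := by linarith
  have hs1 : 1 < s := by
    rw [← hs, show (1:ℝ) = Real.sqrt 1 by simp]
    exact Real.sqrt_lt_sqrt (by norm_num) hκ1
  have hs0 : 0 < s := by linarith
  have hLs : μ * s ^ 2 = L := by
    rw [← hs, Real.sq_sqrt hκ0.le, hκ]; field_simp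
  have hτ0 : 0 < 1 / s := by positivity
  have hτ1 : 1 / s < 1 := by rw [div_lt_one hs0]; exact hs1
  have hρ0 : (0:ℝ) ≤ 1 - 1 / s := by linarith
  -- gradient vanishes at the common minimizer
  have hs0' : s ≠ 0 := hs0.ne'
  have hμ' : μ ≠ 0 := hμ.ne'
  have hsp1 : s + 1 ≠ 0 := by positivity
  have hgzero : ∀ k, g k xstar = 0 := by
    intro k
    set G0 := g k xstar with hG0
    have h := descent_lemma L (f k) (g k) (hgrad k) (hsmooth k) xstar (xstar - (1 / L) • G0)
    have e0 : xstar - (1 / L) • G0 - xstar = -((1 / L) • G0) := by abel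
    rw [e0] at h
    have e1 : ⟪G0, -((1 / L) • G0)⟫ = -(1 / L) * ‖G0‖ ^ 2 := by
      rw [inner_neg_right, real_inner_smul_right, real_inner_self_eq_norm_sq]; ring
    have e2 : ‖-((1 / L) • G0)‖ ^ 2 = (1 / L) ^ 2 * ‖G0‖ ^ 2 := by
      rw [norm_neg, norm_smul, Real.norm_eq_abs, abs_of_pos (by positivity : (0:ℝ) < 1 / L)]
      ring
    rw [e1, e2] at h
    have hm := hmin k (xstar - (1 / L) • G0)
    have e3 : L / 2 * ((1 / L) ^ 2 * ‖G0‖ ^ 2) + -(1 / L) * ‖G0‖ ^ 2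
        = -(1 / (2 * L)) * ‖G0‖ ^ 2 := by field_simp; ring
    have hc : (0:ℝ) < 1 / (2 * L) := by positivity
    have h4 : 1 / (2 * L) * ‖G0‖ ^ 2 ≤ 0 := by linarith
    have hle : ‖G0‖ ^ 2 ≤ 0 := by nlinarith [h4, hc]
    have h5 : ‖G0‖ ^ 2 = 0 := le_antisymm hle (sq_nonneg _)
    have : ‖G0‖ = 0 := by
      exact (pow_eq_zero_iff two_ne_zero).mp h5
    exact norm_eq_zero.mp this
  obtain ⟨z, hzdef⟩ : ∃ z : ℕ → EuclideanSpace ℝ (Fin d),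
      z = fun k => y k + (1 + s) • (x k - y k) := ⟨_, rfl⟩
  have key : ∀ N, f N (y N) - fstar + μ / 2 * ‖z N - xstar‖ ^ 2
      ≤ (L + μ) * R ^ 2 / 2 * (1 - 1 / s) ^ N := by
    intro N
    induction N with
    | zero =>
      have hz0 : z 0 = x0 := by
        simp [hzdef, hx0, hy0]
      have h := descent_lemma L (f 0) (g 0) (hgrad 0) (hsmooth 0) xstar x0
      rw [hgzero 0, hval 0] at h
      simp only [inner_zero_left, add_zero] at h
      rw [hz0, hy0, hR, pow_zero]
      linarith [h]
    | succ k ih =>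
      have H1 : f k (y (k + 1)) ≤ f k (x k) - 1 / (2 * L) * ‖g k (x k)‖ ^ 2 := by
        have h := descent_lemma L (f k) (g k) (hgrad k) (hsmooth k) (x k) (y (k + 1))
        have e0 : y (k + 1) - x k = -((1 / L) • g k (x k)) := by rw [hyup k]; abel
        rw [e0] at h
        have e1 : ⟪g k (x k), -((1 / L) • g k (x k))⟫ = -(1 / L) * ‖g k (x k)‖ ^ 2 := by
          rw [inner_neg_right, real_inner_smul_right, real_inner_self_eq_norm_sq]; ring
        have e2 : ‖-((1 / L) • g k (x k))‖ ^ 2 = (1 / L) ^ 2 * ‖g k (x k)‖ ^ 2 := by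
          rw [norm_neg, norm_smul, Real.norm_eq_abs,
            abs_of_pos (by positivity : (0:ℝ) < 1 / L)]
          ring
        rw [e1, e2] at h
        have e3 : L / 2 * ((1 / L) ^ 2 * ‖g k (x k)‖ ^ 2) + -(1 / L) * ‖g k (x k)‖ ^ 2
            = -(1 / (2 * L)) * ‖g k (x k)‖ ^ 2 := by field_simp; ring
        linarith
      have H2 : f k (x k) - fstar
          ≤ ⟪g k (x k), x k - xstar⟫ - μ / 2 * ‖x k - xstar‖ ^ 2 := by
        have h := hstrong k (x k) xstar
        rw [hval k] at h
        have e1 : ⟪g k (x k), xstar - x k⟫ = -⟪g k (x k), x k - xstar⟫ := by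
          rw [← inner_neg_right]; congr 1; abel
        have e2 : ‖xstar - x k‖ = ‖x k - xstar‖ := norm_sub_rev _ _
        rw [e1, e2] at h; linarith
      have H3 : f k (x k) - fstar ≤ (f k (y k) - fstar) + ⟪g k (x k), x k - y k⟫ := by
        have h := hstrong k (x k) (y k)
        have e1 : ⟪g k (x k), y k - x k⟫ = -⟪g k (x k), x k - y k⟫ := by
          rw [← inner_neg_right]; congr 1; abel
        rw [e1] at h
        have hpos : 0 ≤ μ / 2 * ‖y k - x k‖ ^ 2 := by positivity
        linarith
      have ha : (1 - 1 / s) • (z k - xstar) + (1 / s) • (x k - xstar)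
          = (x k - xstar) + (s - 1) • (x k - y k) := by
        simp only [hzdef]
        match_scalars <;> field_simp [hs0', hμ', hsp1] <;> ring
      have hZ : z (k + 1) - xstar
          = ((1 - 1 / s) • (z k - xstar) + (1 / s) • (x k - xstar))
            - (1 / (s * μ)) • g k (x k) := by
        simp only [hzdef, hxup k, hyup k]
        rw [← hLs]
        match_scalars <;> field_simp [hs0', hμ', hsp1] <;> ring
      have hQ : ‖z (k + 1) - xstar‖ ^ 2
          = ‖(x k - xstar) + (s - 1) • (x k - y k)‖ ^ 2
            - 2 * ((1 / (s * μ)) * (⟪g k (x k), x k - xstar⟫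
              + (s - 1) * ⟪g k (x k), x k - y k⟫))
            + (1 / (s * μ)) ^ 2 * ‖g k (x k)‖ ^ 2 := by
        rw [hZ, ha, norm_sub_sq_real]
        have e : ⟪(x k - xstar) + (s - 1) • (x k - y k), (1 / (s * μ)) • g k (x k)⟫
            = (1 / (s * μ)) * (⟪g k (x k), x k - xstar⟫
              + (s - 1) * ⟪g k (x k), x k - y k⟫) := by
          rw [real_inner_smul_right, inner_add_left, real_inner_smul_left,
            real_inner_comm (x k - xstar), real_inner_comm (x k - y k)]
          try ring
        have e2 : ‖(1 / (s * μ)) • g k (x k)‖ ^ 2 = (1 / (s * μ)) ^ 2 * ‖g k (x k)‖ ^ 2 := by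
          rw [norm_smul, Real.norm_eq_abs, abs_of_pos (by positivity : (0:ℝ) < 1 / (s * μ))]
          try ring
        rw [e, e2]
        try ring
      have hconv : ‖(x k - xstar) + (s - 1) • (x k - y k)‖ ^ 2
          ≤ (1 - 1 / s) * ‖z k - xstar‖ ^ 2 + (1 / s) * ‖x k - xstar‖ ^ 2 := by
        rw [← ha]
        exact convex_norm_sq (1 / s) hτ0.le hτ1.le _ _
      have eG : μ / 2 * ((1 / (s * μ)) ^ 2 * ‖g k (x k)‖ ^ 2)
          = 1 / (2 * L) * ‖g k (x k)‖ ^ 2 := by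
        rw [← hLs]; field_simp
      have epq : μ / 2 * (2 * ((1 / (s * μ)) * (⟪g k (x k), x k - xstar⟫
            + (s - 1) * ⟪g k (x k), x k - y k⟫)))
          = (1 / s) * ⟪g k (x k), x k - xstar⟫ + (1 - 1 / s) * ⟪g k (x k), x k - y k⟫ := by
        field_simp
      have hQ' : μ / 2 * ‖z (k + 1) - xstar‖ ^ 2
          = μ / 2 * ‖(x k - xstar) + (s - 1) • (x k - y k)‖ ^ 2
            - ((1 / s) * ⟪g k (x k), x k - xstar⟫ + (1 - 1 / s) * ⟪g k (x k), x k - y k⟫)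
            + 1 / (2 * L) * ‖g k (x k)‖ ^ 2 := by
        rw [hQ]; linarith [eG, epq]
      have H2' := mul_le_mul_of_nonneg_left H2 hτ0.le
      have H3' := mul_le_mul_of_nonneg_left H3 hρ0
      have hm := hmono k (y (k + 1))
      have hconv' := mul_le_mul_of_nonneg_left hconv (by positivity : (0:ℝ) ≤ μ / 2)
      have step : f (k + 1) (y (k + 1)) - fstar + μ / 2 * ‖z (k + 1) - xstar‖ ^ 2
          ≤ (1 - 1 / s) * (f k (y k) - fstar + μ / 2 * ‖z k - xstar‖ ^ 2) := by
        linarith [hQ', hconv', H1, H2', H3', hm]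
      calc f (k + 1) (y (k + 1)) - fstar + μ / 2 * ‖z (k + 1) - xstar‖ ^ 2
          ≤ (1 - 1 / s) * (f k (y k) - fstar + μ / 2 * ‖z k - xstar‖ ^ 2) := step
        _ ≤ (1 - 1 / s) * ((L + μ) * R ^ 2 / 2 * (1 - 1 / s) ^ k) :=
            mul_le_mul_of_nonneg_left ih hρ0
        _ = (L + μ) * R ^ 2 / 2 * (1 - 1 / s) ^ (k + 1) := by rw [pow_succ]; ring
  intro N
  have hkeyN := key N
  have hnn : 0 ≤ μ / 2 * ‖z N - xstar‖ ^ 2 := by positivity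
  constructor
  · linarith
  · have h1 := hstrong N xstar (y N)
    rw [hgzero N, hval N] at h1
    simp only [inner_zero_left, add_zero] at h1
    have hA : μ / 2 * ‖y N - xstar‖ ^ 2 ≤ f N (y N) - fstar := by linarith
    have hB : f N (y N) - fstar ≤ (L + μ) * R ^ 2 / 2 * (1 - 1 / s) ^ N := by linarith
    have hgoal : μ * ‖y N - xstar‖ ^ 2 ≤ μ * ((L + μ) * R ^ 2 / μ * (1 - 1 / s) ^ N) := by
      have : μ * ((L + μ) * R ^ 2 / μ * (1 - 1 / s) ^ N)
          = 2 * ((L + μ) * R ^ 2 / 2 * (1 - 1 / s) ^ N) := by field_simp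
      rw [this]; linarith
    exact le_of_mul_le_mul_left (by linarith [hgoal]) hμ
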